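/- Let X, Y be Polish spaces and let μ, ν be finitely-supported Borel probability measures on X and Y respectively, and let c : X × Y → ℝ be a real-valued cost function. A transport plan γ ∈ Π(μ,ν) is optimal for the transport problem with cost c if and only if γ is concentrated on a c-cyclically monotone set. -/

import Mathlib

open MeasureTheory

/-- A set `Γ ⊆ X × Y` is `c`-cyclically monotone for a real-valued cost. -/
def CCyclicallyMonotone {X Y : Type*} (c : X × Y → ℝ) (Γ : Set (X × Y)) : Prop :=
  ∀ (k : ℕ) (p : Fin k → X × Y), (∀ i, p i ∈ Γ) →
    ∀ σ : Equiv.Perm (Fin k),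
      ∑ i, c (p i) ≤ ∑ i, c ((p i).1, (p (σ i)).2)

/-- `γ` is a transport plan between `μ` and `ν`. -/
def IsCoupling {X Y : Type*} [MeasurableSpace X] [MeasurableSpace Y]
    (μ : Measure X) (ν : Measure Y) (γ : Measure (X × Y)) : Prop :=
  γ.map Prod.fst = μ ∧ γ.map Prod.snd = ν

set_option linter.unusedSectionVars false
noncomputable section
open MeasureTheory Measure Set ENNReal

namespace OptAux

variable {Z W : Type*} [MeasurableSpace Z] [MeasurableSingletonClass Z]

lemma integrable_dirac' (f : Z → ℝ) (a : Z) : Integrable f (dirac a) := by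
  have h : f =ᵐ[dirac a] fun _ => f a := by
    rw [MeasureTheory.ae_dirac_eq a]; exact Filter.eventually_pure.2 rfl
  exact (integrable_const (f a)).congr h.symm

lemma integrable_sumDirac {ι : Type*} (K : Finset ι) (g : ι → Z) (w : ι → ℝ≥0∞)
    (hw : ∀ p ∈ K, w p ≠ ∞) (f : Z → ℝ) :
    Integrable f (∑ p ∈ K, w p • dirac (g p)) := by
  classical
  induction K using Finset.cons_induction with
  | empty => simp
  | cons a s ha ih =>
    rw [Finset.sum_cons]
    exact ((integrable_dirac' f (g a)).smul_measure (hw a (Finset.mem_cons_self a s))).add_measure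
      (ih fun p hp => hw p (Finset.mem_cons_of_mem hp))

lemma integral_sumDirac {ι : Type*} (K : Finset ι) (g : ι → Z) (w : ι → ℝ≥0∞)
    (hw : ∀ p ∈ K, w p ≠ ∞) (f : Z → ℝ) :
    ∫ x, f x ∂(∑ p ∈ K, w p • dirac (g p)) = ∑ p ∈ K, (w p).toReal * f (g p) := by
  classical
  induction K using Finset.cons_induction with
  | empty => simp
  | cons a s ha ih =>
    rw [Finset.sum_cons, Finset.sum_cons,
      integral_add_measure
        ((integrable_dirac' f (g a)).smul_measure (hw a (Finset.mem_cons_self a s)))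
        (integrable_sumDirac s g w (fun p hp => hw p (Finset.mem_cons_of_mem hp)) f),
      integral_smul_measure, integral_dirac, ih fun p hp => hw p (Finset.mem_cons_of_mem hp)]
    simp [smul_eq_mul]

lemma map_sumDirac {ι : Type*} [MeasurableSpace W] (K : Finset ι) (g : ι → Z) (w : ι → ℝ≥0∞)
    (h : Z → W) (hh : Measurable h) :
    (∑ p ∈ K, w p • dirac (g p)).map h = ∑ p ∈ K, w p • dirac (h (g p)) := by
  classical
  induction K using Finset.cons_induction with
  | empty => simp [Measure.map_zero]
  | cons a s ha ih =>
    rw [Finset.sum_cons, Finset.sum_cons, Measure.map_add _ _ hh, Measure.map_smul,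
      Measure.map_dirac' hh, ih]

lemma sumDirac_apply {ι : Type*} (K : Finset ι) (g : ι → Z) (w : ι → ℝ≥0∞) (E : Set Z) :
    (∑ p ∈ K, w p • dirac (g p)) E = ∑ p ∈ K, w p * E.indicator 1 (g p) := by
  rw [Measure.finset_sum_apply]
  refine Finset.sum_congr rfl fun p _ => ?_
  rw [Measure.smul_apply, Measure.dirac_apply, smul_eq_mul]

lemma measure_finset_eq_sum (γ : Measure Z) (F : Finset Z) : γ ↑F = ∑ p ∈ F, γ {p} := by
  classical
  have : (↑F : Set Z) = ⋃ p ∈ F, {p} := by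
    ext x; simp
  rw [this, measure_biUnion_finset ?_ fun b _ => measurableSet_singleton b]
  · intro i _ j _ hij
    exact Set.disjoint_singleton.mpr hij

lemma rep (γ : Measure Z) [IsProbabilityMeasure γ] (K : Finset Z) (hK : γ ↑K = 1) :
    γ = ∑ p ∈ K, γ {p} • dirac p := by
  classical
  have hKc : γ (↑K : Set Z)ᶜ = 0 := by
    rw [measure_compl K.measurableSet (measure_ne_top _ _), hK, measure_univ, tsub_self]
  ext E hE
  have h1 : γ E = γ (E ∩ ↑K) := (measure_inter_conull hKc).symm
  have h2 : E ∩ ↑K = ↑(K.filter (· ∈ E)) := by ext p; simp [and_comm]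
  rw [h1, h2, measure_finset_eq_sum, Finset.sum_filter]
  rw [show (∑ p ∈ K, γ {p} • dirac p) E = ∑ p ∈ K, γ {p} * E.indicator 1 p from
    sumDirac_apply K id _ E]
  refine Finset.sum_congr rfl fun p _ => ?_
  by_cases hp : p ∈ E <;> simp [hp]


section Coupling

variable {X Y : Type*} [MeasurableSpace X] [MeasurableSingletonClass X]
  [MeasurableSpace Y] [MeasurableSingletonClass Y]
  {μ : Measure X} {ν : Measure Y} {γ : Measure (X × Y)}

lemma isProb_of_coupling [IsProbabilityMeasure μ] (h : IsCoupling μ ν γ) :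
    IsProbabilityMeasure γ := by
  constructor
  calc γ Set.univ = γ (Prod.fst ⁻¹' Set.univ) := by rw [Set.preimage_univ]
  _ = (γ.map Prod.fst) Set.univ := (Measure.map_apply measurable_fst MeasurableSet.univ).symm
  _ = 1 := by rw [h.1, measure_univ]

lemma coupling_full {S : Finset X} {T : Finset Y} [IsProbabilityMeasure μ]
    [IsProbabilityMeasure ν] (h : IsCoupling μ ν γ) (hS : μ ↑S = 1) (hT : ν ↑T = 1) :
    γ ↑(S ×ˢ T) = 1 := by
  haveI := isProb_of_coupling h
  have hA : γ (Prod.fst ⁻¹' ↑S) = 1 := by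
    rw [← Measure.map_apply measurable_fst S.measurableSet, h.1, hS]
  have hB : γ (Prod.snd ⁻¹' ↑T) = 1 := by
    rw [← Measure.map_apply measurable_snd T.measurableSet, h.2, hT]
  have hBc : γ (Prod.snd ⁻¹' (↑T : Set Y))ᶜ = 0 := by
    rw [measure_compl (T.measurableSet.preimage measurable_snd) (measure_ne_top _ _), hB,
      measure_univ, tsub_self]
  have hprod : (↑(S ×ˢ T) : Set (X × Y)) = (Prod.fst ⁻¹' ↑S) ∩ (Prod.snd ⁻¹' ↑T) := by
    ext p; simp [Finset.mem_product]
  rw [hprod, measure_inter_conull hBc, hA]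

end Coupling

section Forward

variable {X Y : Type*} [MeasurableSpace X] [MeasurableSingletonClass X]
  [MeasurableSpace Y] [MeasurableSingletonClass Y]

lemma forward {μ : Measure X} {ν : Measure Y} [IsProbabilityMeasure μ] [IsProbabilityMeasure ν]
    {S : Finset X} {T : Finset Y} (hS : μ ↑S = 1) (hT : ν ↑T = 1)
    (c : X × Y → ℝ) {γ : Measure (X × Y)} (hγ : IsCoupling μ ν γ)
    (hopt : ∀ γ' : Measure (X × Y), IsCoupling μ ν γ' → ∫ p, c p ∂γ ≤ ∫ p, c p ∂γ') :
    ∃ Γ : Set (X × Y), CCyclicallyMonotone c Γ ∧ γ Γ = 1 := by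
  classical
  haveI := isProb_of_coupling hγ
  set K : Finset (X × Y) := S ×ˢ T with hKdef
  have hK : γ ↑K = 1 := coupling_full hγ hS hT
  set w : X × Y → ℝ≥0∞ := fun p => γ {p} with hwdef
  have hwne : ∀ p, w p ≠ ∞ := fun p => measure_ne_top _ _
  have hrep : γ = ∑ p ∈ K, w p • dirac p := rep γ K hK
  refine ⟨↑(K.filter (fun p => 0 < w p)), ?_, ?_⟩
  swap
  · rw [measure_finset_eq_sum, Finset.sum_filter]
    have hc : ∀ p ∈ K, (if 0 < w p then γ {p} else 0) = γ {p} := by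
      intro p _
      by_cases h : 0 < w p
      · simp [h]
      · push_neg at h
        have h0 : γ {p} = 0 := le_antisymm h zero_le
        rw [if_neg (not_lt.2 h), h0]
    rw [Finset.sum_congr rfl hc, ← measure_finset_eq_sum, hK]
  · intro k pp hpp σ
    by_contra hmono
    push_neg at hmono
    rcases Nat.eq_zero_or_pos k with hk | hk
    · subst hk; simp at hmono
    have hppF : ∀ i, pp i ∈ K.filter (fun p => 0 < w p) := fun i => Finset.mem_coe.1 (hpp i)
    have hppK : ∀ i, pp i ∈ K := fun i => (Finset.mem_filter.1 (hppF i)).1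
    have hppPos : ∀ i, 0 < w (pp i) := fun i => (Finset.mem_filter.1 (hppF i)).2
    set qq : Fin k → X × Y := fun i => ((pp i).1, (pp (σ i)).2) with hqq
    have hqqK : ∀ i, qq i ∈ K := by
      intro i
      have h1 := Finset.mem_product.1 (hppK i)
      have h2 := Finset.mem_product.1 (hppK (σ i))
      exact Finset.mem_product.2 ⟨h1.1, h2.2⟩
    have huniv : (Finset.univ : Finset (Fin k)).Nonempty := ⟨⟨0, hk⟩, Finset.mem_univ _⟩
    set m : ℝ≥0∞ := Finset.univ.inf' huniv (fun i => w (pp i)) with hm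
    obtain ⟨i₀, -, hi₀⟩ := Finset.exists_mem_eq_inf' huniv (fun i => w (pp i))
    have hm0 : m ≠ 0 := by rw [hm, hi₀]; exact (hppPos i₀).ne'
    have hmtop : m ≠ ∞ := by rw [hm, hi₀]; exact hwne _
    set ε : ℝ≥0∞ := m / (k : ℝ≥0∞) with hε
    have hk0 : (k : ℝ≥0∞) ≠ 0 := by exact_mod_cast hk.ne'
    have hε0 : ε ≠ 0 := by
      rw [hε, ne_eq, ENNReal.div_eq_zero_iff]
      push_neg
      exact ⟨hm0, ENNReal.natCast_ne_top k⟩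
    have hεtop : ε ≠ ∞ := by
      rw [hε, ne_eq, ENNReal.div_eq_top]
      push_neg
      exact ⟨fun _ => hk0, fun h => absurd h hmtop⟩
    have hkε : (k : ℝ≥0∞) * ε = m := ENNReal.mul_div_cancel hk0 (ENNReal.natCast_ne_top k)
    set a : X × Y → ℕ := fun p => (Finset.univ.filter (fun i => pp i = p)).card with ha
    have hbound : ∀ p, (a p : ℝ≥0∞) * ε ≤ w p := by
      intro p
      by_cases h : ∃ i, pp i = p
      · rcases h with ⟨i, rfl⟩
        calc (a (pp i) : ℝ≥0∞) * ε ≤ (k : ℝ≥0∞) * ε := by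
              refine mul_le_mul_left (Nat.cast_le.2 ?_) ε
              calc a (pp i) ≤ (Finset.univ : Finset (Fin k)).card := Finset.card_filter_le _ _
                _ = k := by simp
          _ = m := hkε
          _ ≤ w (pp i) := Finset.inf'_le _ (Finset.mem_univ i)
      · have h0 : a p = 0 := by
          rw [ha, Finset.card_eq_zero, Finset.filter_eq_empty_iff]
          exact fun {i} _ hip => h ⟨i, hip⟩
        simp [h0]
    set u : X × Y → ℝ≥0∞ := fun p => w p - (a p : ℝ≥0∞) * ε with hu
    have husum : ∀ p, u p + (a p : ℝ≥0∞) * ε = w p := fun p => tsub_add_cancel_of_le (hbound p)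
    have hune : ∀ p ∈ K, u p ≠ ∞ := fun p _ => ne_top_of_le_ne_top (hwne p) tsub_le_self
    have hcount : ∀ (h : X × Y → ℝ≥0∞),
        ∑ p ∈ K, (a p : ℝ≥0∞) * h p = ∑ i : Fin k, h (pp i) := by
      intro h
      rw [← Finset.sum_fiberwise_of_maps_to (fun i _ => hppK i) (fun i => h (pp i))]
      refine Finset.sum_congr rfl fun p _ => ?_
      rw [Finset.sum_congr rfl (fun i hi => by rw [(Finset.mem_filter.1 hi).2]),
        Finset.sum_const, nsmul_eq_mul, ha]
    have hγeq : γ = (∑ p ∈ K, u p • dirac p) + ∑ i : Fin k, ε • dirac (pp i) := by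
      ext E hE
      rw [hrep]
      simp only [Measure.coe_add, Pi.add_apply, Measure.finset_sum_apply, Measure.smul_apply,
        Measure.dirac_apply, smul_eq_mul]
      rw [← hcount (fun p => ε * E.indicator 1 p), ← Finset.sum_add_distrib]
      refine Finset.sum_congr rfl fun p _ => ?_
      rw [← husum p]; ring
    have happly : ∀ (r : Fin k → X × Y) (E : Set (X × Y)),
        ((∑ p ∈ K, u p • dirac p) + ∑ i : Fin k, ε • dirac (r i)) E
          = ∑ p ∈ K, u p * E.indicator 1 p + ∑ i : Fin k, ε * E.indicator 1 (r i) := by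
      intro r E
      simp only [Measure.coe_add, Pi.add_apply, Measure.finset_sum_apply, Measure.smul_apply,
        Measure.dirac_apply, smul_eq_mul]
    have hcoupling' : IsCoupling μ ν
        ((∑ p ∈ K, u p • dirac p) + ∑ i : Fin k, ε • dirac (qq i)) := by
      constructor
      · rw [← hγ.1]
        ext E hE
        rw [Measure.map_apply measurable_fst hE, Measure.map_apply measurable_fst hE, hγeq,
          happly qq (Prod.fst ⁻¹' E), happly pp (Prod.fst ⁻¹' E)]
        congr 1
      · rw [← hγ.2]
        ext E hE
        rw [Measure.map_apply measurable_snd hE, Measure.map_apply measurable_snd hE, hγeq,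
          happly qq (Prod.snd ⁻¹' E), happly pp (Prod.snd ⁻¹' E)]
        congr 1
        rw [← Equiv.sum_comp σ (fun i => ε * (Prod.snd ⁻¹' E).indicator 1 (pp i))]
        refine Finset.sum_congr rfl fun i _ => ?_
        simp [Set.indicator_apply, Set.mem_preimage, hqq]
    have hint1 : Integrable c (∑ p ∈ K, u p • dirac p) :=
      integrable_sumDirac K (fun p => p) u hune c
    have hint2 : ∀ r : Fin k → X × Y, Integrable c (∑ i : Fin k, ε • dirac (r i)) := fun r =>
      integrable_sumDirac Finset.univ r (fun _ => ε) (fun _ _ => hεtop) c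
    have hcost : ∀ r : Fin k → X × Y,
        ∫ p, c p ∂((∑ p ∈ K, u p • dirac p) + ∑ i : Fin k, ε • dirac (r i))
          = ∑ p ∈ K, (u p).toReal * c p + ∑ i : Fin k, ε.toReal * c (r i) := by
      intro r
      rw [integral_add_measure hint1 (hint2 r)]
      congr 1
      · exact integral_sumDirac K (fun p => p) u hune c
      · exact integral_sumDirac Finset.univ r (fun _ => ε) (fun _ _ => hεtop) c
    have hεR : 0 < ε.toReal := ENNReal.toReal_pos hε0 hεtop
    have hlt : ∫ p, c p ∂((∑ p ∈ K, u p • dirac p) + ∑ i : Fin k, ε • dirac (qq i))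
        < ∫ p, c p ∂γ := by
      rw [hcost qq, hγeq, hcost pp]
      have : ∑ i : Fin k, ε.toReal * c (qq i) < ∑ i : Fin k, ε.toReal * c (pp i) := by
        rw [← Finset.mul_sum, ← Finset.mul_sum]
        exact mul_lt_mul_of_pos_left hmono hεR
      linarith
    exact absurd (hopt _ hcoupling') (not_le.2 hlt)

end Forward

section Backward

variable {X Y : Type*} [MeasurableSpace X] [MeasurableSingletonClass X]
  [MeasurableSpace Y] [MeasurableSingletonClass Y]

lemma backward {μ : Measure X} {ν : Measure Y} [IsProbabilityMeasure μ] [IsProbabilityMeasure ν]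
    {S : Finset X} {T : Finset Y} (hS : μ ↑S = 1) (hT : ν ↑T = 1)
    (c : X × Y → ℝ) {γ : Measure (X × Y)} (hγ : IsCoupling μ ν γ)
    {Γ : Set (X × Y)} (hΓcm : CCyclicallyMonotone c Γ) (hΓ1 : γ Γ = 1)
    (γ' : Measure (X × Y)) (hγ'c : IsCoupling μ ν γ') :
    ∫ p, c p ∂γ ≤ ∫ p, c p ∂γ' := by
  classical
  haveI := isProb_of_coupling hγ
  haveI := isProb_of_coupling hγ'c
  set K : Finset (X × Y) := S ×ˢ T with hKdef
  have hK : γ ↑K = 1 := coupling_full hγ hS hT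
  have hK' : γ' ↑K = 1 := coupling_full hγ'c hS hT
  set w : X × Y → ℝ≥0∞ := fun p => γ {p} with hwdef
  set w' : X × Y → ℝ≥0∞ := fun p => γ' {p} with hw'def
  have hwne : ∀ p ∈ K, w p ≠ ∞ := fun p _ => measure_ne_top _ _
  have hw'ne : ∀ p ∈ K, w' p ≠ ∞ := fun p _ => measure_ne_top _ _
  -- every point of positive mass lies in Γ
  have hmem : ∀ p : X × Y, 0 < w p → p ∈ Γ := by
    intro p hp
    by_contra hpΓ
    have hsub : Γ ⊆ ({p} : Set (X × Y))ᶜ := by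
      intro q hq
      simp only [Set.mem_compl_iff, Set.mem_singleton_iff]
      rintro rfl
      exact hpΓ hq
    have h1 : (1 : ℝ≥0∞) ≤ γ ({p} : Set (X × Y))ᶜ := hΓ1 ▸ measure_mono hsub
    have h2 : γ ({p} : Set (X × Y))ᶜ < 1 := by
      rw [measure_compl (measurableSet_singleton p) (measure_ne_top _ _), measure_univ]
      exact ENNReal.sub_lt_self ENNReal.one_ne_top one_ne_zero hp.ne'
    exact absurd h1 (not_le.2 h2)
  set Γ₀ : Set (X × Y) := {p | p ∈ K ∧ 0 < w p} with hΓ₀def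
  have hΓ₀sub : Γ₀ ⊆ Γ := fun p hp => hmem p hp.2
  have hΓ₀K : ∀ p ∈ Γ₀, p ∈ K := fun p hp => hp.1
  have hne : Γ₀.Nonempty := by
    by_contra h
    rw [Set.not_nonempty_iff_eq_empty] at h
    have hz : ∀ p ∈ K, γ {p} = 0 := by
      intro p hp
      by_contra hzp
      have hpΓ₀ : p ∈ Γ₀ := ⟨hp, zero_lt_iff.2 hzp⟩
      rw [h] at hpΓ₀
      exact Set.notMem_empty p hpΓ₀
    have h0 : γ ↑K = 0 := by rw [measure_finset_eq_sum]; exact Finset.sum_eq_zero hz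
    rw [hK] at h0
    exact one_ne_zero h0
  obtain ⟨p₀, hp₀⟩ := hne
  have hS' : S.Nonempty := ⟨p₀.1, (Finset.mem_product.1 (hΓ₀K p₀ hp₀)).1⟩
  have hT' : T.Nonempty := ⟨p₀.2, (Finset.mem_product.1 (hΓ₀K p₀ hp₀)).2⟩
  -- chain values
  set A : X → Set ℝ := fun x => {r | ∃ n : ℕ, ∃ f : Fin (n + 1) → X × Y,
      (∀ j, f j ∈ Γ₀) ∧ f 0 = p₀ ∧
      r = (∑ j : Fin n, (c ((f j.succ).1, (f j.castSucc).2) - c (f j.castSucc)))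
          + (c (x, (f (Fin.last n)).2) - c (f (Fin.last n)))} with hA
  have hAne : ∀ x, (A x).Nonempty := by
    intro x
    exact ⟨_, 0, fun _ => p₀, fun _ => hp₀, rfl, rfl⟩
  -- cyclical monotonicity along chains
  have hchain : ∀ (n : ℕ) (f : Fin (n + 1) → X × Y), (∀ j, f j ∈ Γ₀) →
      ∑ i : Fin (n + 1), c (f i)
        ≤ c ((f 0).1, (f (Fin.last n)).2)
          + ∑ j : Fin n, c ((f j.succ).1, (f j.castSucc).2) := by
    intro n f hf
    have hcm := hΓcm (n + 1) f (fun j => hΓ₀sub (hf j)) (finRotate (n + 1)).symm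
    have hσ0 : (finRotate (n + 1)).symm 0 = Fin.last n := by
      rw [Equiv.symm_apply_eq, finRotate_last]
    have hσs : ∀ j : Fin n, (finRotate (n + 1)).symm j.succ = j.castSucc := by
      intro j
      rw [Equiv.symm_apply_eq, finRotate_succ_apply, Fin.coeSucc_eq_succ]
    calc ∑ i : Fin (n + 1), c (f i)
        ≤ ∑ i : Fin (n + 1), c ((f i).1, (f ((finRotate (n + 1)).symm i)).2) := hcm
      _ = c ((f 0).1, (f (Fin.last n)).2)
          + ∑ j : Fin n, c ((f j.succ).1, (f j.castSucc).2) := by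
          rw [Fin.sum_univ_succ]
          simp only [hσ0, hσs]
  -- lower bound for chain values
  have hAbd : ∀ x, ∀ r ∈ A x, T.inf' hT' (fun y => c (x, y) - c (p₀.1, y)) ≤ r := by
    intro x r hr
    obtain ⟨n, f, hf, hf0, rfl⟩ := hr
    have hch := hchain n f hf
    rw [hf0] at hch
    have hTn : (f (Fin.last n)).2 ∈ T := (Finset.mem_product.1 (hΓ₀K _ (hf _))).2
    have hsum : ∑ j : Fin n, (c ((f j.succ).1, (f j.castSucc).2) - c (f j.castSucc))
        = ∑ j : Fin n, c ((f j.succ).1, (f j.castSucc).2) - ∑ j : Fin n, c (f j.castSucc) :=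
      Finset.sum_sub_distrib _ _
    have hsum2 : ∑ i : Fin (n + 1), c (f i)
        = ∑ j : Fin n, c (f j.castSucc) + c (f (Fin.last n)) := by
      rw [Fin.sum_univ_castSucc]
    have hinf : T.inf' hT' (fun y => c (x, y) - c (p₀.1, y))
        ≤ c (x, (f (Fin.last n)).2) - c (p₀.1, (f (Fin.last n)).2) := Finset.inf'_le _ hTn
    linarith [hsum, hsum2, hch, hinf]
  set φ : X → ℝ := fun x => sInf (A x) with hφ
  have hφ_le : ∀ x, ∀ r ∈ A x, φ x ≤ r := fun x r hr =>
    csInf_le ⟨_, fun r' hr' => hAbd x r' hr'⟩ hr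
  -- key inequality from extending chains
  have key1 : ∀ q ∈ Γ₀, ∀ z, φ z ≤ φ q.1 + (c (z, q.2) - c q) := by
    intro q hq z
    have h1 : ∀ r ∈ A q.1, φ z ≤ r + (c (z, q.2) - c q) := by
      intro r hr
      obtain ⟨n, f, hf, hf0, rfl⟩ := hr
      refine hφ_le z _ ⟨n + 1, Fin.snoc f q, ?_, ?_, ?_⟩
      · intro j
        induction j using Fin.lastCases with
        | last => rw [Fin.snoc_last]; exact hq
        | cast j => rw [Fin.snoc_castSucc]; exact hf j
      · rw [show (0 : Fin (n + 2)) = Fin.castSucc 0 from (Fin.castSucc_zero).symm,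
          Fin.snoc_castSucc]
        exact hf0
      · conv_rhs => rw [Fin.sum_univ_castSucc]
        simp only [Fin.snoc_castSucc, Fin.snoc_last, Fin.succ_castSucc, Fin.succ_last]
        try ring
    have h2 : φ z - (c (z, q.2) - c q) ≤ φ q.1 :=
      le_csInf (hAne q.1) (fun r hr => by linarith [h1 r hr])
    linarith
  set ψ : Y → ℝ := fun y => S.inf' hS' (fun x => c (x, y) - φ x) with hψ
  have hle : ∀ p ∈ K, φ p.1 + ψ p.2 ≤ c p := by
    intro p hp
    have h1 : ψ p.2 ≤ c (p.1, p.2) - φ p.1 :=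
      Finset.inf'_le _ (Finset.mem_product.1 hp).1
    simp only [Prod.mk.eta] at h1
    linarith
  have heq : ∀ q ∈ Γ₀, φ q.1 + ψ q.2 = c q := by
    intro q hq
    refine le_antisymm (hle q (hΓ₀K q hq)) ?_
    have h1 : c q - φ q.1 ≤ ψ q.2 := by
      refine Finset.le_inf' _ _ fun x _ => ?_
      have := key1 q hq x
      linarith
    linarith
  -- cost computations
  have hrep : γ = ∑ p ∈ K, w p • dirac p := rep γ K hK
  have hrep' : γ' = ∑ p ∈ K, w' p • dirac p := rep γ' K hK'
  have hcost : ∫ p, c p ∂γ = ∑ p ∈ K, (w p).toReal * c p := by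
    rw [hrep]; exact integral_sumDirac K (fun p => p) w hwne c
  have hcost' : ∫ p, c p ∂γ' = ∑ p ∈ K, (w' p).toReal * c p := by
    rw [hrep']; exact integral_sumDirac K (fun p => p) w' hw'ne c
  have hμrep : μ = ∑ p ∈ K, w p • dirac p.1 := by
    rw [← hγ.1, hrep]; exact map_sumDirac K (fun p => p) w Prod.fst measurable_fst
  have hμrep' : μ = ∑ p ∈ K, w' p • dirac p.1 := by
    rw [← hγ'c.1, hrep']; exact map_sumDirac K (fun p => p) w' Prod.fst measurable_fst
  have hνrep : ν = ∑ p ∈ K, w p • dirac p.2 := by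
    rw [← hγ.2, hrep]; exact map_sumDirac K (fun p => p) w Prod.snd measurable_snd
  have hνrep' : ν = ∑ p ∈ K, w' p • dirac p.2 := by
    rw [← hγ'c.2, hrep']; exact map_sumDirac K (fun p => p) w' Prod.snd measurable_snd
  have hφμ : ∫ x, φ x ∂μ = ∑ p ∈ K, (w p).toReal * φ p.1 := by
    conv_lhs => rw [hμrep]
    exact integral_sumDirac K Prod.fst w hwne φ
  have hφμ' : ∫ x, φ x ∂μ = ∑ p ∈ K, (w' p).toReal * φ p.1 := by
    conv_lhs => rw [hμrep']
    exact integral_sumDirac K Prod.fst w' hw'ne φ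
  have hψν : ∫ y, ψ y ∂ν = ∑ p ∈ K, (w p).toReal * ψ p.2 := by
    conv_lhs => rw [hνrep]
    exact integral_sumDirac K Prod.snd w hwne ψ
  have hψν' : ∫ y, ψ y ∂ν = ∑ p ∈ K, (w' p).toReal * ψ p.2 := by
    conv_lhs => rw [hνrep']
    exact integral_sumDirac K Prod.snd w' hw'ne ψ
  calc ∫ p, c p ∂γ = ∑ p ∈ K, (w p).toReal * c p := hcost
    _ = ∑ p ∈ K, (w p).toReal * (φ p.1 + ψ p.2) := by
        refine Finset.sum_congr rfl fun p hp => ?_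
        by_cases h0 : w p = 0
        · rw [show (w p).toReal = 0 by rw [h0]; rfl]; ring
        · rw [heq p ⟨hp, zero_lt_iff.2 h0⟩]
    _ = (∑ p ∈ K, (w p).toReal * φ p.1) + ∑ p ∈ K, (w p).toReal * ψ p.2 := by
        rw [← Finset.sum_add_distrib]
        exact Finset.sum_congr rfl fun p _ => by ring
    _ = (∫ x, φ x ∂μ) + ∫ y, ψ y ∂ν := by rw [hφμ, hψν]
    _ = (∑ p ∈ K, (w' p).toReal * φ p.1) + ∑ p ∈ K, (w' p).toReal * ψ p.2 := by
        rw [hφμ', hψν']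
    _ = ∑ p ∈ K, (w' p).toReal * (φ p.1 + ψ p.2) := by
        rw [← Finset.sum_add_distrib]
        exact Finset.sum_congr rfl fun p _ => by ring
    _ ≤ ∑ p ∈ K, (w' p).toReal * c p :=
        Finset.sum_le_sum fun p hp =>
          mul_le_mul_of_nonneg_left (hle p hp) ENNReal.toReal_nonneg
    _ = ∫ p, c p ∂γ' := hcost'.symm

end Backward

end OptAux

/-- For finitely-supported marginals and a real-valued cost, a transport plan is optimal
if and only if it is concentrated on a `c`-cyclically monotone set. -/
theorem optimal_iff_cCyclicallyMonotone_of_finitelySupported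
    {X Y : Type*}
    [TopologicalSpace X] [PolishSpace X] [MeasurableSpace X] [BorelSpace X]
    [TopologicalSpace Y] [PolishSpace Y] [MeasurableSpace Y] [BorelSpace Y]
    (μ : Measure X) (ν : Measure Y) [IsProbabilityMeasure μ] [IsProbabilityMeasure ν]
    (hμ : ∃ S : Finset X, μ (↑S : Set X) = 1) (hν : ∃ T : Finset Y, ν (↑T : Set Y) = 1)
    (c : X × Y → ℝ)
    (γ : Measure (X × Y)) (hγ : IsCoupling μ ν γ) :
    (∀ γ' : Measure (X × Y), IsCoupling μ ν γ' → ∫ p, c p ∂γ ≤ ∫ p, c p ∂γ') ↔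
      ∃ Γ : Set (X × Y), CCyclicallyMonotone c Γ ∧ γ Γ = 1 := by
  obtain ⟨S, hS⟩ := hμ
  obtain ⟨T, hT⟩ := hν
  constructor
  · intro hopt
    exact OptAux.forward hS hT c hγ hopt
  · rintro ⟨Γ, hcm, h1⟩ γ' hγ'
    exact OptAux.backward hS hT c hγ hcm h1 γ' hγ'
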